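/- Let γ^m and γ^n denote the piecewise linear hat functions on a uniform time grid t_k = kΔt, i.e. γ^m(t) = max(0, 1 - |t - t_m|/Δt). Then for fixed x, y with d := |x - y| ≥ 0, the integral ∫₀^∞ γ^m(t - d) (γ^n)'(t) dt equals -(1/(2Δt²))(t_{n-m+2} - d)² when t_{n-m+1} ≤ d ≤ t_{n-m+2}, equals (1/Δt²)(t_{n-m+1} - d)² + (1/(2Δt²))(t_{n-m} - d)² - 1 when t_{n-m} ≤ d ≤ t_{n-m+1}, equals -[(1/Δt²)(t_{n-m-1} - d)² + (1/(2Δt²))(t_{n-m} - d)² - 1] when t_{n-m-1} ≤ d ≤ t_{n-m}, equals (1/(2Δt²))(t_{n-m-2} - d)² when t_{n-m-2} ≤ d ≤ t_{n-m-1}, and equals 0 otherwise (assuming m, n ≥ 2 so all relevant indices are nonnegative). -/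

import Mathlib

open MeasureTheory Filter Topology

lemma hasDerivAt_mul_abs (v : ℝ) : HasDerivAt (fun x : ℝ => x * |x|) (2 * |v|) v := by
  rcases lt_trichotomy v 0 with hv | hv | hv
  · have h2 : HasDerivAt (fun x : ℝ => -(x * x)) (2 * |v|) v := by
      have h3 : (2:ℝ) * |v| = -(1 * v + v * 1) := by rw [abs_of_neg hv]; ring
      rw [h3]; exact ((hasDerivAt_id v).mul (hasDerivAt_id v)).neg
    refine h2.congr_of_eventuallyEq ?_
    filter_upwards [Iio_mem_nhds hv] with x hx
    rw [abs_of_neg hx]; ring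
  · subst hv
    rw [hasDerivAt_iff_tendsto_slope]
    have habs : Tendsto (fun y : ℝ => |y|) (𝓝[≠] (0:ℝ)) (𝓝 (2 * |(0:ℝ)|)) := by
      have : Tendsto (fun y : ℝ => |y|) (𝓝 (0:ℝ)) (𝓝 |(0:ℝ)|) := continuous_abs.tendsto (0:ℝ)
      simpa using this.mono_left nhdsWithin_le_nhds
    refine habs.congr' ?_
    filter_upwards [self_mem_nhdsWithin] with y hy
    have hy' : (y:ℝ) ≠ 0 := hy
    rw [slope_def_field]
    field_simp
    simp
  · have h2 : HasDerivAt (fun x : ℝ => x * x) (2 * |v|) v := by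
      have h3 : (2:ℝ) * |v| = 1 * v + v * 1 := by rw [abs_of_pos hv]; ring
      rw [h3]; exact (hasDerivAt_id v).mul (hasDerivAt_id v)
    refine h2.congr_of_eventuallyEq ?_
    filter_upwards [Ioi_mem_nhds hv] with x hx
    rw [abs_of_pos hx]

lemma hat_eq (h : ℝ) (hh : 0 < h) (u : ℝ) :
    max 0 (1 - |u| / h) = (|u + h| + |u - h| - 2 * |u|) / (2 * h) := by
  rcases le_total (|u|) h with h1 | h1
  · rw [max_eq_right (by rw [sub_nonneg]; exact (div_le_one hh).mpr h1)]
    obtain ⟨ha, hb⟩ := abs_le.mp h1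
    rw [abs_of_nonneg (show (0:ℝ) ≤ u + h by linarith),
      abs_of_nonpos (show u - h ≤ (0:ℝ) by linarith)]
    rcases le_total 0 u with hu | hu
    · rw [abs_of_nonneg hu]; field_simp; ring
    · rw [abs_of_nonpos hu]; field_simp; ring
  · rw [max_eq_left (by rw [sub_nonpos]; exact (one_le_div hh).mpr h1)]
    rcases le_abs'.mp h1 with h2 | h2
    · rw [abs_of_nonpos (show u ≤ (0:ℝ) by linarith),
        abs_of_nonpos (show u + h ≤ (0:ℝ) by linarith),
        abs_of_nonpos (show u - h ≤ (0:ℝ) by linarith)]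
      field_simp
      ring
    · rw [abs_of_nonneg (show (0:ℝ) ≤ u by linarith),
        abs_of_nonneg (show (0:ℝ) ≤ u + h by linarith),
        abs_of_nonneg (show (0:ℝ) ≤ u - h by linarith)]
      field_simp
      ring

set_option maxHeartbeats 1000000 in
/-- Explicit time-integral formula for the Galerkin matrix with piecewise linear
hat functions `γ^m(t) = max(0, 1 - |t - t_m|/Δt)` on the uniform grid `t_k = kΔt`,
where `dγ^n` is the weak derivative of `γ^n` (equal to `1/Δt` on `(t_{n-1},t_n)`,
`-1/Δt` on `(t_n,t_{n+1})`, `0` otherwise). -/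
theorem stmt10 (Δt : ℝ) (hΔt : 0 < Δt) (m n : ℤ) (hm : 2 ≤ m) (hn : 2 ≤ n)
    (d : ℝ) (hd : 0 ≤ d) :
    let t : ℤ → ℝ := fun k => (k : ℝ) * Δt
    let γ : ℤ → ℝ → ℝ := fun j s => max 0 (1 - |s - t j| / Δt)
    let dγ : ℤ → ℝ → ℝ := fun j s =>
      if t (j-1) < s ∧ s < t j then 1/Δt
      else if t j < s ∧ s < t (j+1) then -(1/Δt) else 0
    let Iv : ℝ := ∫ s in Set.Ioi (0 : ℝ), γ m (s - d) * dγ n s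
    ((t (n-m+1) ≤ d ∧ d ≤ t (n-m+2)) → Iv = -(1/(2*Δt^2)) * (t (n-m+2) - d)^2) ∧
    ((t (n-m) ≤ d ∧ d ≤ t (n-m+1)) →
      Iv = (1/Δt^2) * (t (n-m+1) - d)^2 + (1/(2*Δt^2)) * (t (n-m) - d)^2 - 1) ∧
    ((t (n-m-1) ≤ d ∧ d ≤ t (n-m)) →
      Iv = -((1/Δt^2) * (t (n-m-1) - d)^2 + (1/(2*Δt^2)) * (t (n-m) - d)^2 - 1)) ∧
    ((t (n-m-2) ≤ d ∧ d ≤ t (n-m-1)) → Iv = (1/(2*Δt^2)) * (t (n-m-2) - d)^2) ∧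
    ((d < t (n-m-2) ∨ t (n-m+2) < d) → Iv = 0) := by
  intro t γ dγ Iv
  set c : ℝ := (m : ℝ) * Δt + d with hc
  set hat : ℝ → ℝ := fun s => max 0 (1 - |s - c| / Δt) with hhat
  set H : ℝ → ℝ := fun s =>
    ((s - c + Δt) * |s - c + Δt| + (s - c - Δt) * |s - c - Δt|
      - 2 * ((s - c) * |s - c|)) / (4 * Δt) with hH
  have hγ : ∀ s : ℝ, γ m (s - d) = hat s := by
    intro s
    have h1 : s - d - t m = s - c := by simp only [t, hc]; ring
    simp only [γ, hhat, h1]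
  have hhat_cont : Continuous hat := by
    apply continuous_const.max
    exact (continuous_const.sub (((continuous_id.sub continuous_const).abs).div_const Δt))
  have hderiv : ∀ s : ℝ, HasDerivAt H (hat s) s := by
    intro s
    have d1 : HasDerivAt (fun s : ℝ => (s - c + Δt) * |s - c + Δt|) (2 * |s - c + Δt|) s := by
      have := (hasDerivAt_mul_abs (s - c + Δt)).comp s
        (((hasDerivAt_id s).sub_const c).add_const Δt)
      simpa [Function.comp_def] using this
    have d2 : HasDerivAt (fun s : ℝ => (s - c - Δt) * |s - c - Δt|) (2 * |s - c - Δt|) s := by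
      have := (hasDerivAt_mul_abs (s - c - Δt)).comp s
        (((hasDerivAt_id s).sub_const c).sub_const Δt)
      simpa [Function.comp_def] using this
    have d3 : HasDerivAt (fun s : ℝ => 2 * ((s - c) * |s - c|)) (2 * (2 * |s - c|)) s := by
      have := ((hasDerivAt_mul_abs (s - c)).comp s ((hasDerivAt_id s).sub_const c)).const_mul 2
      simpa [mul_comm] using this
    have hD : HasDerivAt H
        ((2 * |s - c + Δt| + 2 * |s - c - Δt| - 2 * (2 * |s - c|)) / (4 * Δt)) s :=
      ((d1.add d2).sub d3).div_const (4 * Δt)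
    have heq : (2 * |s - c + Δt| + 2 * |s - c - Δt| - 2 * (2 * |s - c|)) / (4 * Δt)
        = hat s := by
      simp only [hhat]
      rw [hat_eq Δt hΔt (s - c)]
      field_simp
      ring
    rwa [heq] at hD
  have hint : ∀ a b : ℝ, a ≤ b → ∫ s in Set.Ioo a b, hat s = H b - H a := by
    intro a b hab
    rw [← MeasureTheory.integral_Ioc_eq_integral_Ioo, ← intervalIntegral.integral_of_le hab]
    exact intervalIntegral.integral_eq_sub_of_hasDerivAt (fun s _ => hderiv s)
      (hhat_cont.intervalIntegrable a b)
  -- grid facts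
  have htmono : ∀ j k : ℤ, j ≤ k → t j ≤ t k := by
    intro j k hjk
    simp only [t]
    have : (j : ℝ) ≤ (k : ℝ) := by exact_mod_cast hjk
    nlinarith
  have ht01 : (0 : ℝ) < t (n - 1) := by
    simp only [t]
    have : (1 : ℝ) ≤ ((n - 1 : ℤ) : ℝ) := by
      have : (1 : ℤ) ≤ n - 1 := by omega
      exact_mod_cast this
    nlinarith
  have htn1 : t (n - 1) < t n := by
    simp only [t]
    have : ((n - 1 : ℤ) : ℝ) < (n : ℝ) := by push_cast; linarith
    nlinarith
  have htn2 : t n < t (n + 1) := by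
    simp only [t]
    have : ((n : ℤ) : ℝ) < ((n + 1 : ℤ) : ℝ) := by push_cast; linarith
    nlinarith
  -- decomposition
  set g1 : ℝ → ℝ := fun s => hat s * (1 / Δt) with hg1
  set g2 : ℝ → ℝ := fun s => hat s * (-(1 / Δt)) with hg2
  have hfe : ∀ s : ℝ, γ m (s - d) * dγ n s
      = (Set.Ioo (t (n - 1)) (t n)).indicator g1 s
        + (Set.Ioo (t n) (t (n + 1))).indicator g2 s := by
    intro s
    simp only [dγ]
    split_ifs with h1 h2
    · rw [Set.indicator_of_mem (Set.mem_Ioo.mpr h1),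
        Set.indicator_of_notMem (by
          intro hs
          exact absurd hs.1 (not_lt.mpr (le_of_lt h1.2)))]
      rw [hγ s]
      simp [hg1]
    · rw [Set.indicator_of_notMem (by
          intro hs
          exact absurd hs.2 (not_lt.mpr (le_of_lt h2.1))),
        Set.indicator_of_mem (Set.mem_Ioo.mpr h2)]
      rw [hγ s]
      simp [hg2]
    · rw [Set.indicator_of_notMem (fun hs => h1 ⟨hs.1, hs.2⟩),
        Set.indicator_of_notMem (fun hs => h2 ⟨hs.1, hs.2⟩)]
      simp
  have hi1 : MeasureTheory.IntegrableOn g1 (Set.Ioo (t (n - 1)) (t n)) :=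
    ((hhat_cont.mul continuous_const).integrableOn_Ioc).mono_set Set.Ioo_subset_Ioc_self
  have hi2 : MeasureTheory.IntegrableOn g2 (Set.Ioo (t n) (t (n + 1))) :=
    ((hhat_cont.mul continuous_const).integrableOn_Ioc).mono_set Set.Ioo_subset_Ioc_self
  have hIv0 : Iv = (1 / Δt) * (H (t n) - H (t (n - 1)))
      - (1 / Δt) * (H (t (n + 1)) - H (t n)) := by
    have hsub1 : Set.Ioo (t (n - 1)) (t n) ⊆ Set.Ioi (0:ℝ) :=
      fun s hs => lt_trans ht01 hs.1
    have hsub2 : Set.Ioo (t n) (t (n + 1)) ⊆ Set.Ioi (0:ℝ) :=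
      fun s hs => lt_trans (lt_trans ht01 htn1) hs.1
    have e1 : Iv = ∫ s in Set.Ioi (0 : ℝ),
        ((Set.Ioo (t (n - 1)) (t n)).indicator g1 s
          + (Set.Ioo (t n) (t (n + 1))).indicator g2 s) := by
      simp only [Iv]
      congr 1
      funext s
      exact hfe s
    rw [e1, MeasureTheory.integral_add
      ((hi1.integrable_indicator measurableSet_Ioo).restrict)
      ((hi2.integrable_indicator measurableSet_Ioo).restrict),
      MeasureTheory.setIntegral_indicator measurableSet_Ioo,
      MeasureTheory.setIntegral_indicator measurableSet_Ioo,
      Set.inter_eq_self_of_subset_right hsub1,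
      Set.inter_eq_self_of_subset_right hsub2]
    simp only [hg1, hg2]
    rw [MeasureTheory.integral_mul_const, MeasureTheory.integral_mul_const,
      hint _ _ (le_of_lt htn1), hint _ _ (le_of_lt htn2)]
    ring
  -- express in terms of x
  set x : ℝ := t (n - m) - d with hx
  have hA1 : t (n - m + 1) - d = x + Δt := by
    simp only [hx, t]; push_cast; ring
  have hA2 : t (n - m + 2) - d = x + 2 * Δt := by
    simp only [hx, t]; push_cast; ring
  have hB1 : t (n - m - 1) - d = x - Δt := by
    simp only [hx, t]; push_cast; ring
  have hB2 : t (n - m - 2) - d = x - 2 * Δt := by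
    simp only [hx, t]; push_cast; ring
  have hIvQ : Iv = (1 / (4 * Δt ^ 2)) *
      (4 * ((x + Δt) * |x + Δt|) + 4 * ((x - Δt) * |x - Δt|) - 6 * (x * |x|)
        - (x - 2 * Δt) * |x - 2 * Δt| - (x + 2 * Δt) * |x + 2 * Δt|) := by
    rw [hIv0]
    simp only [hH]
    have a1 : t (n - 1) - c + Δt = x := by simp only [hx, t, hc]; push_cast; ring
    have a2 : t (n - 1) - c - Δt = x - 2 * Δt := by simp only [hx, t, hc]; push_cast; ring
    have a3 : t (n - 1) - c = x - Δt := by simp only [hx, t, hc]; push_cast; ring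
    have b1 : t n - c + Δt = x + Δt := by simp only [hx, t, hc]; push_cast; ring
    have b2 : t n - c - Δt = x - Δt := by simp only [hx, t, hc]; push_cast; ring
    have b3 : t n - c = x := by simp only [hx, t, hc]; push_cast; ring
    have c1 : t (n + 1) - c + Δt = x + 2 * Δt := by simp only [hx, t, hc]; push_cast; ring
    have c2 : t (n + 1) - c - Δt = x := by simp only [hx, t, hc]; push_cast; ring
    have c3 : t (n + 1) - c = x + Δt := by simp only [hx, t, hc]; push_cast; ring
    rw [a1, a2, a3, b1, b2, b3, c1, c2, c3]
    field_simp
    ring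
  have hne : (Δt : ℝ) ≠ 0 := ne_of_gt hΔt
  refine ⟨?_, ?_, ?_, ?_, ?_⟩
  · rintro ⟨h1, h2⟩
    have e1 : x + Δt ≤ 0 := by linarith
    have e2 : 0 ≤ x + 2 * Δt := by linarith
    rw [hIvQ, hA2, abs_of_nonpos e1, abs_of_nonpos (show x - Δt ≤ 0 by linarith),
      abs_of_nonpos (show x ≤ 0 by linarith),
      abs_of_nonpos (show x - 2 * Δt ≤ 0 by linarith), abs_of_nonneg e2]
    field_simp
    ring
  · rintro ⟨h1, h2⟩
    have e0 : x ≤ 0 := by simp only [hx]; linarith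
    have e1 : 0 ≤ x + Δt := by linarith
    rw [hIvQ, hA1, abs_of_nonneg e1, abs_of_nonpos (show x - Δt ≤ 0 by linarith),
      abs_of_nonpos e0, abs_of_nonpos (show x - 2 * Δt ≤ 0 by linarith),
      abs_of_nonneg (show 0 ≤ x + 2 * Δt by linarith)]
    field_simp
    ring
  · rintro ⟨h1, h2⟩
    have e0 : 0 ≤ x := by simp only [hx]; linarith
    have e1 : x - Δt ≤ 0 := by linarith
    rw [hIvQ, hB1, abs_of_nonneg (show 0 ≤ x + Δt by linarith), abs_of_nonpos e1,
      abs_of_nonneg e0, abs_of_nonpos (show x - 2 * Δt ≤ 0 by linarith),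
      abs_of_nonneg (show 0 ≤ x + 2 * Δt by linarith)]
    field_simp
    ring
  · rintro ⟨h1, h2⟩
    have e2 : x - 2 * Δt ≤ 0 := by linarith
    have e1 : 0 ≤ x - Δt := by linarith
    rw [hIvQ, hB2, abs_of_nonneg (show 0 ≤ x + Δt by linarith), abs_of_nonneg e1,
      abs_of_nonneg (show 0 ≤ x by linarith), abs_of_nonpos e2,
      abs_of_nonneg (show 0 ≤ x + 2 * Δt by linarith)]
    field_simp
    ring
  · rintro (h1 | h1)
    · have e1 : 0 ≤ x - 2 * Δt := by linarith
      rw [hIvQ, abs_of_nonneg (show 0 ≤ x + Δt by linarith),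
        abs_of_nonneg (show 0 ≤ x - Δt by linarith),
        abs_of_nonneg (show 0 ≤ x by linarith), abs_of_nonneg e1,
        abs_of_nonneg (show 0 ≤ x + 2 * Δt by linarith)]
      field_simp
      ring
    · have e1 : x + 2 * Δt ≤ 0 := by linarith
      rw [hIvQ, abs_of_nonpos (show x + Δt ≤ 0 by linarith),
        abs_of_nonpos (show x - Δt ≤ 0 by linarith),
        abs_of_nonpos (show x ≤ 0 by linarith),
        abs_of_nonpos (show x - 2 * Δt ≤ 0 by linarith), abs_of_nonpos e1]
      field_simp
      ring
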